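/- Let t be a positive integer and let 0 ≤ r < t be an integer such that r is not congruent to j(3j+1)/2 modulo t for any integer j with 0 ≤ j < 2t. Then for all n ≥ 0, the coefficient of q^{tn+r} in (q;q)_∞/(q^t;q^t)_∞ is zero. -/

import Mathlib

open PowerSeries

/-- `(q^r; q^a)_∞ = ∏_{k≥0} (1 - q^{r+ak})` as a formal power series (defined
coefficientwise via truncated products; for `r ≥ 1` factors of index `> n` do not
affect the coefficient of `q^n`). -/
noncomputable def qpoch (r a : ℕ) : PowerSeries ℝ :=
  PowerSeries.mk fun n =>
    PowerSeries.coeff n (∏ k ∈ Finset.range (n + 1), (1 - PowerSeries.X ^ (r + a * k)))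

/-- `(q^a; q^a)_∞ = ∏_{k≥1} (1 - q^{ak})`. -/
noncomputable def E (a : ℕ) : PowerSeries ℝ := qpoch a a

/-- `c_t^{(m)}(n)`: the coefficient of `q^n` in `(q;q)_∞^m / (q^t;q^t)_∞^m`. -/
noncomputable def borweinC (t m n : ℕ) : ℝ :=
  PowerSeries.coeff n ((E 1) ^ m * ((E t) ^ m)⁻¹)


lemma expand_coeff (s : Finset ℕ) (f : ℕ → ℕ) (n : ℕ) :
    PowerSeries.coeff n (∏ k ∈ s, (1 - PowerSeries.X ^ (f k))) =
    ∑ T ∈ s.powerset, if (∑ k ∈ T, f k) = n then (-1 : ℝ) ^ T.card else 0 := by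
  have h1 : ∀ k ∈ s, (1 - PowerSeries.X ^ (f k) : PowerSeries ℝ)
      = (-PowerSeries.X ^ (f k)) + 1 := by intro k _; ring
  rw [Finset.prod_congr rfl h1, Finset.prod_add, map_sum]
  refine Finset.sum_congr rfl fun T hT => ?_
  have h2 : ∀ k ∈ T, (-PowerSeries.X ^ (f k) : PowerSeries ℝ)
      = ((-1 : ℝ) • (1 : PowerSeries ℝ)) * PowerSeries.X ^ (f k) := by
    intro k _; simp
  rw [Finset.prod_congr rfl h2, Finset.prod_mul_distrib, Finset.prod_const,
    Finset.prod_pow_eq_pow_sum, Finset.prod_const_one, mul_one, smul_pow,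
    one_pow, smul_mul_assoc, one_mul, map_smul, PowerSeries.coeff_X_pow]
  simp [eq_comm]


/-- Length of the maximal "staircase" at the top of a distinct partition `S`:
the least `ℓ` with `max - ℓ ∉ S`. -/
def stair (S : Finset ℕ) (hne : S.Nonempty) (h0 : 0 ∉ S) : ℕ :=
  Nat.find (⟨S.max' hne, by simpa using h0⟩ : ∃ ℓ, S.max' hne - ℓ ∉ S)

lemma stair_spec (S : Finset ℕ) (hne : S.Nonempty) (h0 : 0 ∉ S) :
    S.max' hne - stair S hne h0 ∉ S :=
  Nat.find_spec (⟨S.max' hne, by simpa using h0⟩ : ∃ ℓ, S.max' hne - ℓ ∉ S)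

lemma stair_mem (S : Finset ℕ) (hne : S.Nonempty) (h0 : 0 ∉ S) {i : ℕ}
    (hi : i < stair S hne h0) : S.max' hne - i ∈ S := by
  have := Nat.find_min (⟨S.max' hne, by simpa using h0⟩ : ∃ ℓ, S.max' hne - ℓ ∉ S) hi
  simpa using this

lemma stair_pos (S : Finset ℕ) (hne : S.Nonempty) (h0 : 0 ∉ S) :
    1 ≤ stair S hne h0 := by
  rcases Nat.eq_zero_or_pos (stair S hne h0) with h | h
  · exfalso
    have := stair_spec S hne h0
    rw [h] at this
    exact this (by simpa using S.max'_mem hne)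
  · exact h

/-- Franklin's involution. -/
def fr (S : Finset ℕ) : Finset ℕ :=
  if h : S.Nonempty ∧ 0 ∉ S then
    if S.min' h.1 ≤ stair S h.1 h.2 then
      insert (S.max' h.1 + 1)
        ((S.erase (S.min' h.1)).erase (S.max' h.1 - S.min' h.1 + 1))
    else
      insert (stair S h.1 h.2)
        (insert (S.max' h.1 - stair S h.1 h.2) (S.erase (S.max' h.1)))
  else S

lemma one_le_mem (S : Finset ℕ) (h0 : 0 ∉ S) {x : ℕ} (hx : x ∈ S) : 1 ≤ x := by
  rcases Nat.eq_zero_or_pos x with rfl | h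
  · exact absurd hx h0
  · exact h

lemma mem_le_sum (S : Finset ℕ) {x : ℕ} (hx : x ∈ S) : x ≤ S.sum id :=
  Finset.single_le_sum (fun i _ => Nat.zero_le i) hx

lemma sum_Icc_mul_two (a b : ℕ) (ha : 1 ≤ a) (h : a ≤ b) :
    (∑ i ∈ Finset.Icc a b, i) * 2 = (a + b) * (b + 1 - a) := by
  have hIcc : Finset.Icc a b = Finset.range (b+1) \ Finset.range a := by
    ext x; simp only [Finset.mem_Icc, Finset.mem_sdiff, Finset.mem_range]; omega
  have hsub : Finset.range a ⊆ Finset.range (b+1) :=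
    Finset.range_subset_range.mpr (by omega)
  have := Finset.sum_sdiff (f := id) hsub
  rw [hIcc]
  have g1 := Finset.sum_range_id_mul_two (b+1)
  have g2 := Finset.sum_range_id_mul_two a
  have hx : (∑ i ∈ Finset.range (b+1) \ Finset.range a, i) + (∑ i ∈ Finset.range a, i)
      = ∑ i ∈ Finset.range (b+1), i := by simpa using this
  rw [Nat.add_sub_cancel] at g1
  zify [show a ≤ b + 1 by omega, ha] at hx g1 g2 ⊢
  nlinarith [hx, g1, g2]

lemma stair_le (S : Finset ℕ) (hne : S.Nonempty) (h0 : 0 ∉ S) :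
    stair S hne h0 ≤ S.max' hne :=
  Nat.find_le (by simpa using h0)

lemma frA (S : Finset ℕ) (hne : S.Nonempty) (h0 : 0 ∉ S)
    (hmk : S.min' hne ≤ stair S hne h0)
    (hexc : S.max' hne + 1 ≠ 2 * S.min' hne) :
    (fr S).sum id = S.sum id ∧ (fr S).card + 1 = S.card ∧ 0 ∉ fr S ∧ fr (fr S) = S := by
  set m := S.min' hne with hm
  set M := S.max' hne with hM
  set k := stair S hne h0 with hk
  have hmmem : m ∈ S := S.min'_mem hne
  have hMmem : M ∈ S := S.max'_mem hne
  have hm1 : 1 ≤ m := one_le_mem S h0 hmmem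
  have hmM : m ≤ M := S.min'_le _ hMmem
  have fA1 : M - m + 1 ∈ S := by
    have h' := stair_mem S hne h0 (i := m - 1) (by omega)
    rwa [show M - (m-1) = M - m + 1 by omega] at h'
  have fA2 : m < M - m + 1 := by
    have := S.min'_le _ fA1
    omega
  set A := (S.erase m).erase (M - m + 1) with hA
  have hAsub : A ⊆ S := (Finset.erase_subset _ _).trans (Finset.erase_subset _ _)
  have hMA : M + 1 ∉ A := fun h => by have := S.le_max' _ (hAsub h); omega
  have hMm_mem : M - m + 1 ∈ S.erase m := Finset.mem_erase.mpr ⟨by omega, fA1⟩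
  have hfr : fr S = insert (M + 1) A := by
    rw [fr, dif_pos ⟨hne, h0⟩, if_pos hmk]
  -- sum
  have hsum : (fr S).sum id = S.sum id := by
    rw [hfr, Finset.sum_insert hMA]
    have e1 : m + (S.erase m).sum id = S.sum id := Finset.add_sum_erase _ id hmmem
    have e2 : (M - m + 1) + A.sum id = (S.erase m).sum id :=
      Finset.add_sum_erase _ id hMm_mem
    simp only [id] at e1 e2 ⊢
    omega
  -- card
  have hcard : (fr S).card + 1 = S.card := by
    rw [hfr, Finset.card_insert_of_notMem hMA]
    have e1 : (S.erase m).card + 1 = S.card := Finset.card_erase_add_one hmmem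
    have e2 : A.card + 1 = (S.erase m).card := Finset.card_erase_add_one hMm_mem
    omega
  set S' := insert (M + 1) A with hS'
  have hS'ne : S'.Nonempty := Finset.insert_nonempty _ _
  have h0' : 0 ∉ S' := by
    intro h
    rcases Finset.mem_insert.mp h with h | h
    · omega
    · exact h0 (hAsub h)
  have hmax' : S'.max' hS'ne = M + 1 := by
    apply le_antisymm
    · apply Finset.max'_le
      intro x hx
      rcases Finset.mem_insert.mp hx with rfl | hx
      · exact le_rfl
      · have := S.le_max' _ (hAsub hx); omega
    · exact S'.le_max' _ (Finset.mem_insert_self _ _)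
  have hforward : ∀ i < m, M + 1 - i ∈ S' := by
    intro i hi
    rcases Nat.eq_zero_or_pos i with rfl | hi1
    · rw [Nat.sub_zero]; exact Finset.mem_insert_self _ _
    · have hik : i - 1 < k := by omega
      have hmem := stair_mem S hne h0 hik
      have hx : M + 1 - i = M - (i - 1) := by omega
      rw [hx]
      apply Finset.mem_insert_of_mem
      refine Finset.mem_erase.mpr ⟨by omega, Finset.mem_erase.mpr ⟨by omega, hmem⟩⟩
  have hnotmem : M + 1 - m ∉ S' := by
    rw [show M + 1 - m = M - m + 1 by omega]
    intro h
    rcases Finset.mem_insert.mp h with h | h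
    · omega
    · exact (Finset.mem_erase.mp h).1 rfl
  have hstair' : stair S' hS'ne h0' = m := by
    rw [stair, Nat.find_eq_iff]
    rw [hmax']
    exact ⟨hnotmem, fun i hi hns => hns (hforward i hi)⟩
  have hmin' : stair S' hS'ne h0' < S'.min' hS'ne := by
    rw [hstair', Finset.lt_min'_iff]
    intro x hx
    rcases Finset.mem_insert.mp hx with rfl | hx
    · omega
    · have h1 := S.min'_le _ (hAsub hx)
      have h2 := (Finset.mem_erase.mp ((Finset.erase_subset _ _) hx)).1
      -- x ∈ A ⊆ S.erase m, so x ≠ m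
      have h3 := (Finset.mem_erase.mp (Finset.mem_of_mem_erase hx)).1
      omega
  have hfr2 : fr S' = insert m (insert (M + 1 - m) (S'.erase (M + 1))) := by
    rw [fr, dif_pos ⟨hS'ne, h0'⟩, if_neg (not_le.mpr hmin'), hstair', hmax']
  have e0 : S'.erase (M + 1) = A := by rw [hS']; exact Finset.erase_insert hMA
  have hrev : fr (fr S) = S := by
    rw [hfr, hfr2, e0, show M + 1 - m = M - m + 1 by omega, hA,
      Finset.insert_erase hMm_mem, Finset.insert_erase hmmem]
  exact ⟨hsum, hcard, hfr ▸ h0', hrev⟩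

lemma frB (S : Finset ℕ) (hne : S.Nonempty) (h0 : 0 ∉ S)
    (hmk : stair S hne h0 < S.min' hne)
    (hexc : S.max' hne ≠ 2 * stair S hne h0) :
    (fr S).sum id = S.sum id ∧ (fr S).card = S.card + 1 ∧ 0 ∉ fr S ∧ fr (fr S) = S := by
  set m := S.min' hne with hm
  set M := S.max' hne with hM
  set k := stair S hne h0 with hk
  have hmmem : m ∈ S := S.min'_mem hne
  have hMmem : M ∈ S := S.max'_mem hne
  have hm1 : 1 ≤ m := one_le_mem S h0 hmmem
  have hk1 : 1 ≤ k := stair_pos S hne h0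
  have hkM : k ≤ M := stair_le S hne h0
  have fB0 : M - (k - 1) ∈ S := stair_mem S hne h0 (by omega)
  have hmlow : m ≤ M - (k - 1) := S.min'_le _ fB0
  have hM2k : 2 * k + 1 ≤ M := by omega
  have fB2 : k ∉ S := fun h => by have := S.min'_le _ h; omega
  have fB3 : M - k ∉ S := stair_spec S hne h0
  set B := insert (M - k) (S.erase M) with hB
  have hMk_nB : M - k ∉ S.erase M := fun h => fB3 (Finset.mem_of_mem_erase h)
  have hk_nB : k ∉ B := by
    intro h
    rcases Finset.mem_insert.mp h with h | h
    · omega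
    · exact fB2 (Finset.mem_of_mem_erase h)
  set S' := insert k B with hS'
  have hfr : fr S = S' := by
    rw [fr, dif_pos ⟨hne, h0⟩, if_neg (not_le.mpr hmk)]
  have hBsub : ∀ x ∈ B, x ∈ S ∨ x = M - k := by
    intro x hx
    rcases Finset.mem_insert.mp hx with rfl | hx
    · exact Or.inr rfl
    · exact Or.inl (Finset.mem_of_mem_erase hx)
  have hsum : (fr S).sum id = S.sum id := by
    rw [hfr, hS', Finset.sum_insert hk_nB, hB, Finset.sum_insert hMk_nB]
    have e1 : M + (S.erase M).sum id = S.sum id := Finset.add_sum_erase _ id hMmem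
    simp only [id] at e1 ⊢
    omega
  have hcard : (fr S).card = S.card + 1 := by
    rw [hfr, hS', Finset.card_insert_of_notMem hk_nB, hB,
      Finset.card_insert_of_notMem hMk_nB]
    have e1 : (S.erase M).card + 1 = S.card := Finset.card_erase_add_one hMmem
    omega
  have hS'ne : S'.Nonempty := Finset.insert_nonempty _ _
  have h0' : 0 ∉ S' := by
    intro h
    rcases Finset.mem_insert.mp h with h | h
    · omega
    · rcases hBsub _ h with h | h
      · exact h0 h
      · omega
  have hmax' : S'.max' hS'ne = M - 1 := by
    apply le_antisymm
    · apply Finset.max'_le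
      intro x hx
      rcases Finset.mem_insert.mp hx with rfl | hx
      · omega
      · rcases Finset.mem_insert.mp hx with rfl | hx
        · omega
        · have h1 := S.le_max' _ (Finset.mem_of_mem_erase hx)
          have h2 := (Finset.mem_erase.mp hx).1
          omega
    · apply S'.le_max'
      rcases Nat.eq_or_lt_of_le hk1 with h1 | h1
      · rw [show M - 1 = M - k by omega]
        exact Finset.mem_insert_of_mem (Finset.mem_insert_self _ _)
      · have hm1' : M - 1 ∈ S := stair_mem S hne h0 (show 1 < k from h1)
        exact Finset.mem_insert_of_mem (Finset.mem_insert_of_mem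
          (Finset.mem_erase.mpr ⟨by omega, hm1'⟩))
  have hmin' : S'.min' hS'ne = k := by
    apply le_antisymm
    · exact S'.min'_le _ (Finset.mem_insert_self _ _)
    · apply Finset.le_min'
      intro x hx
      rcases Finset.mem_insert.mp hx with rfl | hx
      · exact le_rfl
      · rcases hBsub _ hx with h | h
        · have := S.min'_le _ h; omega
        · omega
  have hstair' : k ≤ stair S' hS'ne h0' := by
    rw [stair, Nat.le_find_iff]
    intro i hi
    rw [not_not, hmax']
    rcases Nat.eq_or_lt_of_le (show i ≤ k - 1 by omega) with h1 | h1
    · rw [show M - 1 - i = M - k by omega]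
      exact Finset.mem_insert_of_mem (Finset.mem_insert_self _ _)
    · have hmem : M - (i + 1) ∈ S := stair_mem S hne h0 (by omega)
      rw [show M - 1 - i = M - (i + 1) by omega]
      exact Finset.mem_insert_of_mem (Finset.mem_insert_of_mem
        (Finset.mem_erase.mpr ⟨by omega, hmem⟩))
  have hcond : S'.min' hS'ne ≤ stair S' hS'ne h0' := by rw [hmin']; exact hstair'
  have hfr2 : fr S' = insert (M - 1 + 1) ((S'.erase k).erase (M - 1 - k + 1)) := by
    rw [fr, dif_pos ⟨hS'ne, h0'⟩, if_pos hcond, hmax', hmin']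
  have e0 : S'.erase k = B := by rw [hS']; exact Finset.erase_insert hk_nB
  have e1 : B.erase (M - k) = S.erase M := by rw [hB]; exact Finset.erase_insert hMk_nB
  have hrev : fr (fr S) = S := by
    rw [hfr, hfr2, e0, show M - 1 - k + 1 = M - k by omega, e1,
      show M - 1 + 1 = M by omega, Finset.insert_erase hMmem]
  exact ⟨hsum, hcard, hfr ▸ h0', hrev⟩

lemma excA (S : Finset ℕ) (hne : S.Nonempty) (h0 : 0 ∉ S)
    (hmk : S.min' hne ≤ stair S hne h0)
    (hexc : S.max' hne + 1 = 2 * S.min' hne) :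
    S.sum id * 2 = S.min' hne * (3 * S.min' hne - 1) := by
  set m := S.min' hne with hm
  set M := S.max' hne with hM
  set k := stair S hne h0 with hk
  have hm1 : 1 ≤ m := one_le_mem S h0 (S.min'_mem hne)
  have hmM : m ≤ M := S.min'_le _ (S.max'_mem hne)
  have hicc : S = Finset.Icc m M := by
    ext x
    simp only [Finset.mem_Icc]
    constructor
    · intro hx; exact ⟨S.min'_le _ hx, S.le_max' _ hx⟩
    · rintro ⟨h1, h2⟩
      have hlt : M - x < k := by omega
      have := stair_mem S hne h0 hlt
      rwa [show M - (M - x) = x by omega] at this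
  have := sum_Icc_mul_two m M hm1 hmM
  rw [hicc, show (Finset.Icc m M).sum id = ∑ i ∈ Finset.Icc m M, i from rfl, this,
    show M + 1 - m = m by omega, show m + M = 3 * m - 1 by omega, mul_comm]

lemma excB (S : Finset ℕ) (hne : S.Nonempty) (h0 : 0 ∉ S)
    (hmk : stair S hne h0 < S.min' hne)
    (hexc : S.max' hne = 2 * stair S hne h0) :
    S.sum id * 2 = stair S hne h0 * (3 * stair S hne h0 + 1) := by
  set m := S.min' hne with hm
  set M := S.max' hne with hM
  set k := stair S hne h0 with hk
  have hm1 : 1 ≤ m := one_le_mem S h0 (S.min'_mem hne)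
  have hk1 : 1 ≤ k := stair_pos S hne h0
  have hmM : m ≤ M := S.min'_le _ (S.max'_mem hne)
  have hicc : S = Finset.Icc (k + 1) (2 * k) := by
    ext x
    simp only [Finset.mem_Icc]
    constructor
    · intro hx
      have h1 := S.min'_le _ hx
      have h2 := S.le_max' _ hx
      omega
    · rintro ⟨h1, h2⟩
      have hlt : M - x < k := by omega
      have := stair_mem S hne h0 hlt
      rwa [show M - (M - x) = x by omega] at this
  have := sum_Icc_mul_two (k + 1) (2 * k) (by omega) (by omega)
  rw [hicc, show (Finset.Icc (k+1) (2*k)).sum id = ∑ i ∈ Finset.Icc (k+1) (2*k), i from rfl,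
    this, show 2 * k + 1 - (k + 1) = k by omega, show k + 1 + 2 * k = 3 * k + 1 by omega,
    mul_comm]

lemma pent_sum (n : ℕ) (hp : ∀ j : ℕ, n * 2 ≠ j * (3 * j - 1) ∧ n * 2 ≠ j * (3 * j + 1)) :
    ∑ S ∈ (Finset.Icc 1 (n + 1)).powerset.filter (fun S => S.sum id = n),
      (-1 : ℝ) ^ S.card = 0 := by
  have hn1 : 1 ≤ n := by
    rcases Nat.eq_zero_or_pos n with rfl | h
    · exact absurd (by simp : (0:ℕ) * 2 = 0 * (3 * 0 - 1)) (hp 0).1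
    · exact h
  apply Finset.sum_involution (fun S _ => fr S)
  · -- f a + f (g a) = 0
    intro S hS
    obtain ⟨hsub, hsum⟩ := Finset.mem_filter.mp hS
    have hsub' := Finset.mem_powerset.mp hsub
    have h0 : 0 ∉ S := fun h => by simpa using hsub' h
    have hne : S.Nonempty := by
      rcases S.eq_empty_or_nonempty with rfl | h
      · simp at hsum; omega
      · exact h
    by_cases hc : S.min' hne ≤ stair S hne h0
    · have hexc : S.max' hne + 1 ≠ 2 * S.min' hne := by
        intro he
        exact (hp (S.min' hne)).1 (hsum ▸ excA S hne h0 hc he)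
      obtain ⟨_, hcard, _, _⟩ := frA S hne h0 hc hexc
      rw [← hcard, pow_succ]
      ring
    · push_neg at hc
      have hexc : S.max' hne ≠ 2 * stair S hne h0 := by
        intro he
        exact (hp (stair S hne h0)).2 (hsum ▸ excB S hne h0 hc he)
      obtain ⟨_, hcard, _, _⟩ := frB S hne h0 hc hexc
      rw [hcard, pow_succ]
      ring
  · -- g a ≠ a
    intro S hS _
    obtain ⟨hsub, hsum⟩ := Finset.mem_filter.mp hS
    have hsub' := Finset.mem_powerset.mp hsub
    have h0 : 0 ∉ S := fun h => by simpa using hsub' h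
    have hne : S.Nonempty := by
      rcases S.eq_empty_or_nonempty with rfl | h
      · simp at hsum; omega
      · exact h
    intro heq
    by_cases hc : S.min' hne ≤ stair S hne h0
    · have hexc : S.max' hne + 1 ≠ 2 * S.min' hne := by
        intro he
        exact (hp (S.min' hne)).1 (hsum ▸ excA S hne h0 hc he)
      obtain ⟨_, hcard, _, _⟩ := frA S hne h0 hc hexc
      rw [heq] at hcard
      omega
    · push_neg at hc
      have hexc : S.max' hne ≠ 2 * stair S hne h0 := by
        intro he
        exact (hp (stair S hne h0)).2 (hsum ▸ excB S hne h0 hc he)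
      obtain ⟨_, hcard, _, _⟩ := frB S hne h0 hc hexc
      rw [heq] at hcard
      omega
  · -- g a ∈ s
    intro S hS
    obtain ⟨hsub, hsum⟩ := Finset.mem_filter.mp hS
    have hsub' := Finset.mem_powerset.mp hsub
    have h0 : 0 ∉ S := fun h => by simpa using hsub' h
    have hne : S.Nonempty := by
      rcases S.eq_empty_or_nonempty with rfl | h
      · simp at hsum; omega
      · exact h
    have key : (fr S).sum id = n ∧ 0 ∉ fr S := by
      by_cases hc : S.min' hne ≤ stair S hne h0
      · have hexc : S.max' hne + 1 ≠ 2 * S.min' hne := by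
          intro he
          exact (hp (S.min' hne)).1 (hsum ▸ excA S hne h0 hc he)
        obtain ⟨hs, _, h0', _⟩ := frA S hne h0 hc hexc
        exact ⟨hs.trans hsum, h0'⟩
      · push_neg at hc
        have hexc : S.max' hne ≠ 2 * stair S hne h0 := by
          intro he
          exact (hp (stair S hne h0)).2 (hsum ▸ excB S hne h0 hc he)
        obtain ⟨hs, _, h0', _⟩ := frB S hne h0 hc hexc
        exact ⟨hs.trans hsum, h0'⟩
    refine Finset.mem_filter.mpr ⟨Finset.mem_powerset.mpr ?_, key.1⟩
    intro x hx
    have h1 : 1 ≤ x := one_le_mem _ key.2 hx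
    have h2 : x ≤ n := key.1 ▸ mem_le_sum _ hx
    exact Finset.mem_Icc.mpr ⟨h1, by omega⟩
  · -- involution
    intro S hS
    obtain ⟨hsub, hsum⟩ := Finset.mem_filter.mp hS
    have hsub' := Finset.mem_powerset.mp hsub
    have h0 : 0 ∉ S := fun h => by simpa using hsub' h
    have hne : S.Nonempty := by
      rcases S.eq_empty_or_nonempty with rfl | h
      · simp at hsum; omega
      · exact h
    by_cases hc : S.min' hne ≤ stair S hne h0
    · have hexc : S.max' hne + 1 ≠ 2 * S.min' hne := by
        intro he
        exact (hp (S.min' hne)).1 (hsum ▸ excA S hne h0 hc he)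
      exact (frA S hne h0 hc hexc).2.2.2
    · push_neg at hc
      have hexc : S.max' hne ≠ 2 * stair S hne h0 := by
        intro he
        exact (hp (stair S hne h0)).2 (hsum ▸ excB S hne h0 hc he)
      exact (frB S hne h0 hc hexc).2.2.2

lemma coeff_E1 (n : ℕ) : PowerSeries.coeff n (E 1) =
    ∑ S ∈ (Finset.Icc 1 (n+1)).powerset, if S.sum id = n then (-1 : ℝ) ^ S.card else 0 := by
  have himg : Finset.Icc 1 (n+1) = (Finset.range (n+1)).image (· + 1) := by
    ext x; simp only [Finset.mem_Icc, Finset.mem_image, Finset.mem_range]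
    constructor
    · rintro ⟨h1, h2⟩; exact ⟨x - 1, by omega, by omega⟩
    · rintro ⟨a, ha, rfl⟩; omega
  have : (∏ k ∈ Finset.range (n + 1), (1 - PowerSeries.X ^ (1 + 1 * k) : PowerSeries ℝ))
      = ∏ j ∈ Finset.Icc 1 (n+1), (1 - PowerSeries.X ^ j) := by
    rw [himg, Finset.prod_image (by intro a _ b _ h; simp only at h; omega)]
    exact Finset.prod_congr rfl fun k _ => by ring_nf
  rw [E, qpoch, PowerSeries.coeff_mk, this]
  have h := expand_coeff (Finset.Icc 1 (n+1)) id n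
  simpa using h

lemma coeff_Et (t m : ℕ) (h : ¬ t ∣ m) : PowerSeries.coeff m (E t) = 0 := by
  rw [E, qpoch, PowerSeries.coeff_mk, expand_coeff]
  refine Finset.sum_eq_zero fun T _ => ?_
  rw [if_neg]
  intro hs
  exact h ⟨∑ k ∈ T, (1 + k), by rw [← hs, Finset.mul_sum]; exact Finset.sum_congr rfl fun k _ => by ring⟩

lemma constCoeff_Et (t : ℕ) (ht : 0 < t) : PowerSeries.constantCoeff (E t) = 1 := by
  have : PowerSeries.constantCoeff (E t) = PowerSeries.coeff 0 (E t) := by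
    simp [PowerSeries.coeff_zero_eq_constantCoeff]
  rw [this, E, qpoch, PowerSeries.coeff_mk, Finset.prod_range_one]
  simp [PowerSeries.coeff_X_pow, ht.ne']

lemma coeff_Et_inv (t : ℕ) (ht : 0 < t) : ∀ m, ¬ t ∣ m → PowerSeries.coeff m (E t)⁻¹ = 0 := by
  intro m
  induction m using Nat.strong_induction_on with
  | _ m ih =>
    intro hm
    have hm0 : m ≠ 0 := by rintro rfl; exact hm (dvd_zero t)
    rw [PowerSeries.coeff_inv, if_neg hm0]
    have : ∑ x ∈ Finset.HasAntidiagonal.antidiagonal m,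
        (if x.2 < m then PowerSeries.coeff x.1 (E t) * PowerSeries.coeff x.2 (E t)⁻¹ else 0) = 0 := by
      refine Finset.sum_eq_zero fun x hx => ?_
      rcases Finset.HasAntidiagonal.mem_antidiagonal.mp hx with hsum
      by_cases h2 : x.2 < m
      · rw [if_pos h2]
        by_cases hd : t ∣ x.1
        · have : ¬ t ∣ x.2 := fun hd2 => hm (hsum ▸ dvd_add hd hd2)
          rw [ih x.2 h2 this, mul_zero]
        · rw [coeff_Et t x.1 hd, zero_mul]
      · rw [if_neg h2]
    rw [this, mul_zero]


lemma even_pent (a : ℕ) : 2 ∣ a * (3 * a + 1) := by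
  obtain ⟨w, hw⟩ := Nat.even_mul_succ_self a
  have h : a * (3 * a + 1) = a * (a + 1) + 2 * (a * a) := by ring
  exact ⟨w + a * a, by omega⟩

lemma pent_residue (t i : ℕ) (ht : 0 < t)
    (h : ∃ j : ℕ, i * 2 = j * (3 * j - 1) ∨ i * 2 = j * (3 * j + 1)) :
    ∃ j0 : ℕ, j0 < 2 * t ∧ (t : ℤ) ∣ ((j0 * (3 * j0 + 1) / 2 : ℕ) : ℤ) - (i : ℤ) := by
  obtain ⟨j, hj⟩ := h
  have h2t : 0 < 2 * t := by omega
  -- reduce the minus case with j = 0 to the plus case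
  have hj' : (i * 2 = j * (3 * j + 1)) ∨ (1 ≤ j ∧ i * 2 = j * (3 * j - 1)) := by
    rcases hj with hj | hj
    · rcases Nat.eq_zero_or_pos j with rfl | h1
      · left; simpa using hj
      · right; exact ⟨h1, hj⟩
    · left; exact hj
  rcases hj' with hj | ⟨hj1, hj⟩
  · -- plus case
    refine ⟨j % (2 * t), Nat.mod_lt _ h2t, ?_⟩
    set j0 := j % (2 * t) with hj0
    set s := j / (2 * t) with hs
    have hdm : 2 * t * s + j0 = j := Nat.div_add_mod j (2 * t)
    have hz : (j : ℤ) = (j0 : ℤ) + 2 * t * s := by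
      have : ((2 * t * s + j0 : ℕ) : ℤ) = (j : ℤ) := by exact_mod_cast hdm
      push_cast at this
      linarith
    have hP : ((j0 * (3 * j0 + 1) / 2 : ℕ) : ℤ) * 2 = (j0 : ℤ) * (3 * j0 + 1) := by
      have := Nat.div_mul_cancel (even_pent j0)
      exact_mod_cast this
    have hi : (i : ℤ) * 2 = (j : ℤ) * (3 * j + 1) := by exact_mod_cast hj
    have key : (j : ℤ) * (3 * j + 1) - (j0 : ℤ) * (3 * j0 + 1)
        = 2 * t * (s * (3 * ((j : ℤ) + j0) + 1)) := by
      rw [hz]; ring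
    refine ⟨-(s * (3 * ((j : ℤ) + j0) + 1)), ?_⟩
    have h2 : (((j0 * (3 * j0 + 1) / 2 : ℕ) : ℤ) - i) * 2
        = ((t : ℤ) * -(s * (3 * ((j : ℤ) + j0) + 1))) * 2 := by
      rw [sub_mul, hP]
      nlinarith [key, hi]
    have := mul_right_cancel₀ (two_ne_zero (α := ℤ)) h2
    exact this
  · -- minus case
    set a := j % (2 * t) with ha
    set q := j / (2 * t) with hq
    have hdm : 2 * t * q + a = j := Nat.div_add_mod j (2 * t)
    have halt : a < 2 * t := Nat.mod_lt _ h2t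
    obtain ⟨j0, hj0lt, s, hsum⟩ :
        ∃ j0 : ℕ, j0 < 2 * t ∧ ∃ s : ℕ, j0 + j = 2 * t * s := by
      have hw : 2 * t * (q + 1) = 2 * t * q + 2 * t := by ring
      rcases Nat.eq_zero_or_pos a with ha0 | ha1
      · refine ⟨0, h2t, q, ?_⟩
        rw [zero_add, ← hdm, ha0, add_zero]
      · refine ⟨2 * t - a, by omega, q + 1, ?_⟩
        rw [hw, ← hdm]
        have hgen : ∀ w : ℕ, 2 * t - a + (w + a) = w + 2 * t := fun w => by omega
        exact hgen _
    refine ⟨j0, hj0lt, ?_⟩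
    have hP : ((j0 * (3 * j0 + 1) / 2 : ℕ) : ℤ) * 2 = (j0 : ℤ) * (3 * j0 + 1) := by
      have := Nat.div_mul_cancel (even_pent j0)
      exact_mod_cast this
    have hi : (i : ℤ) * 2 = (j : ℤ) * (3 * j - 1) := by
      have : ((j * (3 * j - 1) : ℕ) : ℤ) = (j : ℤ) * (3 * j - 1) := by
        push_cast [Nat.cast_sub (show 1 ≤ 3 * j by omega)]; ring
      rw [← this]; exact_mod_cast hj
    have hz : (j0 : ℤ) + j = 2 * t * s := by exact_mod_cast hsum
    refine ⟨s * (3 * ((j0 : ℤ) - j) + 1), ?_⟩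
    have h2 : (((j0 * (3 * j0 + 1) / 2 : ℕ) : ℤ) - i) * 2
        = ((t : ℤ) * (s * (3 * ((j0 : ℤ) - j) + 1))) * 2 := by
      rw [sub_mul, hP]
      nlinarith [hz, hi]
    exact mul_right_cancel₀ (two_ne_zero (α := ℤ)) h2

theorem stmt3 (t : ℕ) (ht : 0 < t) (r : ℕ) (hr : r < t)
    (h : ∀ j : ℕ, j < 2 * t → ¬ (r ≡ j * (3 * j + 1) / 2 [MOD t])) (n : ℕ) :
    borweinC t 1 (t * n + r) = 0 := by
  unfold borweinC
  simp only [pow_one]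
  rw [PowerSeries.coeff_mul]
  apply Finset.sum_eq_zero
  intro x hx
  have hxy : x.1 + x.2 = t * n + r := Finset.HasAntidiagonal.mem_antidiagonal.mp hx
  by_cases hd : t ∣ x.2
  · obtain ⟨c, hc⟩ := hd
    suffices h1 : PowerSeries.coeff x.1 (E 1) = 0 by rw [h1, zero_mul]
    rw [coeff_E1, ← Finset.sum_filter]
    apply pent_sum
    intro j
    have key : ∀ (_ : x.1 * 2 = j * (3 * j - 1) ∨ x.1 * 2 = j * (3 * j + 1)), False := by
      intro hj
      obtain ⟨j0, hj0lt, hdvd⟩ := pent_residue t x.1 ht ⟨j, hj⟩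
      apply h j0 hj0lt
      rw [Nat.modEq_iff_dvd]
      have hir : (t : ℤ) ∣ (x.1 : ℤ) - (r : ℤ) := by
        refine ⟨(n : ℤ) - c, ?_⟩
        have hnat : x.1 + t * c = t * n + r := by rw [← hc]; exact hxy
        have hz : (x.1 : ℤ) + t * c = t * n + r := by exact_mod_cast hnat
        ring_nf
        ring_nf at hz
        linarith
      have hfin := dvd_add hdvd hir
      have : ((j0 * (3 * j0 + 1) / 2 : ℕ) : ℤ) - (x.1 : ℤ) + ((x.1 : ℤ) - (r : ℤ))
          = ((j0 * (3 * j0 + 1) / 2 : ℕ) : ℤ) - (r : ℤ) := by ring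
      rwa [this] at hfin
    exact ⟨fun he => (key (Or.inl he)).elim, fun he => (key (Or.inr he)).elim⟩
  · rw [coeff_Et_inv t ht x.2 hd, mul_zero]
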